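/- Let p_n = [z^n]exp(Σ_{k≥1} d_k z^k/k) with 0 < d⁻ ≤ d_k ≤ d⁺, and fix ε ≥ 0 and q ≥ 1 with q(d⁻−1) − ε > −1. Then there is a constant C = C(d⁻,d⁺,q,ε) such that Σ_{j=1}^n j^{−ε} p_j^q ≤ C n^{1−ε} p_n^q for all n ≥ 1. -/

import Mathlib

open Finset Real

/-- Uniqueness of power series coefficients from values on (0, 1/2). -/
lemma stmt17_coeff_unique {a b : ℕ → ℝ} {S : ℝ → ℝ}
    (ha : ∀ x : ℝ, x ∈ Set.Ioo (0:ℝ) (1/2) → HasSum (fun n => a n * x ^ n) (S x))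
    (hb : ∀ x : ℝ, x ∈ Set.Ioo (0:ℝ) (1/2) → HasSum (fun n => b n * x ^ n) (S x)) :
    ∀ n, a n = b n := by
  set e : ℕ → ℝ := fun n => a n - b n with he_def
  have he : ∀ x : ℝ, x ∈ Set.Ioo (0:ℝ) (1/2) → HasSum (fun n => e n * x ^ n) 0 := by
    intro x hx
    have := (ha x hx).sub (hb x hx)
    simpa [he_def, sub_mul] using this
  -- bound on coefficients
  have h13 : (1/3 : ℝ) ∈ Set.Ioo (0:ℝ) (1/2) := by norm_num
  have hsum13 := (he _ h13).summable
  have htend : Filter.Tendsto (fun m => |e m| * (1/3:ℝ) ^ m) Filter.atTop (nhds 0) := by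
    have h := hsum13.tendsto_atTop_zero.abs
    have heq : (fun m => |e m * (1/3:ℝ) ^ m|) = fun m => |e m| * (1/3:ℝ) ^ m := by
      funext m; rw [abs_mul, abs_pow, abs_of_pos (by norm_num : (0:ℝ) < 1/3)]
    rw [heq] at h; simpa using h
  obtain ⟨K, hK⟩ := htend.bddAbove_range
  have hKmem : ∀ m, |e m| * (1/3:ℝ) ^ m ≤ K := fun m => hK ⟨m, rfl⟩
  have hKcoeff : ∀ m, |e m| ≤ (K+1) * 3 ^ m := by
    intro m
    have h1 : |e m| * (1/3:ℝ)^m * 3^m ≤ (K+1) * 3^m := by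
      have : (K : ℝ) ≤ K + 1 := by linarith
      have h3 : (0:ℝ) ≤ (3:ℝ)^m := by positivity
      nlinarith [hKmem m]
    calc |e m| = |e m| * (1/3:ℝ)^m * 3^m := by
          rw [mul_assoc, ← mul_pow]; norm_num
      _ ≤ (K+1) * 3^m := h1
  have hK1 : (0:ℝ) < K + 1 := by
    have := hKmem 0; have : (0:ℝ) ≤ K := le_trans (by positivity) this; linarith
  -- strong induction
  have main : ∀ n, (∀ i, i < n → e i = 0) → e n = 0 := by
    intro n ih
    by_contra hne
    set B : ℝ := 2 * ((K+1) * 3 ^ (n+1)) with hB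
    have hBpos : 0 < B := by positivity
    have key : ∀ x : ℝ, 0 < x → x < 1/6 → |e n| ≤ B * x := by
      intro x hx0 hx6
      have hx : x ∈ Set.Ioo (0:ℝ) (1/2) := ⟨hx0, by linarith⟩
      have h0 := he x hx
      -- drop first n terms (they vanish)
      have hzero : ∑ i ∈ range n, e i * x ^ i = 0 := by
        apply Finset.sum_eq_zero; intro i hi
        rw [ih i (Finset.mem_range.mp hi)]; ring
      have h1 : HasSum (fun j => e (j + n) * x ^ (j + n)) 0 := by
        have := (hasSum_nat_add_iff' (f := fun m => e m * x ^ m) n).mpr h0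
        rwa [hzero, sub_zero] at this
      -- divide by x^n
      have hxn : (x:ℝ) ^ n ≠ 0 := pow_ne_zero _ (ne_of_gt hx0)
      have h2 : HasSum (fun j => e (j + n) * x ^ j) 0 := by
        have h2' := h1.mul_left ((x ^ n)⁻¹)
        have : (fun j => (x ^ n)⁻¹ * (e (j + n) * x ^ (j + n))) = fun j => e (j + n) * x ^ j := by
          funext j; rw [pow_add]; field_simp
        rw [this] at h2'; simpa using h2'
      -- split off j = 0
      have h3 : HasSum (fun j => e (j + 1 + n) * x ^ (j + 1)) (-(e n)) := by
        have := (hasSum_nat_add_iff' (f := fun j => e (j + n) * x ^ j) 1).mpr h2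
        simpa [Finset.sum_range_one, add_comm] using this
      -- bound the tail
      have hbnd : ∀ j : ℕ, ‖e (j + 1 + n) * x ^ (j + 1)‖ ≤ (B/2 * x) * (3*x) ^ j := by
        intro j
        have h1 : |e (j + 1 + n)| ≤ (K+1) * 3 ^ (j + 1 + n) := hKcoeff _
        have hxp : (0:ℝ) ≤ x ^ (j+1) := by positivity
        calc ‖e (j + 1 + n) * x ^ (j + 1)‖ = |e (j + 1 + n)| * x ^ (j+1) := by
              rw [Real.norm_eq_abs, abs_mul, abs_pow, abs_of_pos hx0]
          _ ≤ ((K+1) * 3 ^ (j + 1 + n)) * x ^ (j+1) := by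
              exact mul_le_mul_of_nonneg_right h1 hxp
          _ = (B/2 * x) * (3*x) ^ j := by
              simp only [hB, mul_pow, pow_add, pow_succ]; ring
      have hgeo : Summable (fun j : ℕ => (B/2 * x) * (3*x) ^ j) := by
        apply Summable.mul_left
        exact summable_geometric_of_lt_one (by positivity) (by linarith)
      have hsum_norm : Summable (fun j => ‖e (j + 1 + n) * x ^ (j + 1)‖) :=
        Summable.of_nonneg_of_le (fun j => norm_nonneg _) hbnd hgeo
      have habs : |e n| ≤ ∑' j : ℕ, (B/2 * x) * (3*x) ^ j := by
        have h4 : -(e n) = ∑' j, e (j + 1 + n) * x ^ (j + 1) := h3.tsum_eq.symm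
        calc |e n| = ‖-(e n)‖ := by rw [norm_neg, Real.norm_eq_abs]
          _ = ‖∑' j, e (j + 1 + n) * x ^ (j + 1)‖ := by rw [h4]
          _ ≤ ∑' j, ‖e (j + 1 + n) * x ^ (j + 1)‖ := norm_tsum_le_tsum_norm hsum_norm
          _ ≤ ∑' j : ℕ, (B/2 * x) * (3*x) ^ j := by
              exact Summable.tsum_le_tsum hbnd hsum_norm hgeo
      have hgval : ∑' j : ℕ, (B/2 * x) * (3*x) ^ j = (B/2 * x) * (1 - 3*x)⁻¹ := by
        rw [tsum_mul_left, tsum_geometric_of_lt_one (by positivity) (by linarith)]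
      have hfin : (B/2 * x) * (1 - 3*x)⁻¹ ≤ B * x := by
        have h5 : (1 - 3*x)⁻¹ ≤ 2 := by
          rw [inv_le_comm₀ (by linarith) (by norm_num)]; linarith
        have : (0:ℝ) ≤ B/2 * x := by positivity
        calc (B/2 * x) * (1 - 3*x)⁻¹ ≤ (B/2 * x) * 2 := mul_le_mul_of_nonneg_left h5 this
          _ = B * x := by ring
      calc |e n| ≤ ∑' j : ℕ, (B/2 * x) * (3*x) ^ j := habs
        _ = (B/2 * x) * (1 - 3*x)⁻¹ := hgval
        _ ≤ B * x := hfin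
    -- contradiction
    have hepos : 0 < |e n| := abs_pos.mpr hne
    set x : ℝ := min (1/12) (|e n| / (2 * B)) with hxdef
    have hx0 : 0 < x := lt_min (by norm_num) (by positivity)
    have hx6 : x < 1/6 := lt_of_le_of_lt (min_le_left _ _) (by norm_num)
    have h6 := key x hx0 hx6
    have h7 : B * x ≤ |e n| / 2 := by
      have : x ≤ |e n| / (2 * B) := min_le_right _ _
      calc B * x ≤ B * (|e n| / (2 * B)) := mul_le_mul_of_nonneg_left this hBpos.le
        _ = |e n| / 2 := by field_simp
    linarith
  intro n
  have : e n = 0 := by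
    induction n using Nat.strong_induction_on with
    | _ n ih => exact main n ih
  have := this
  simpa [he_def, sub_eq_zero] using this

/-- `n ≤ 2 * (3/2)^n`. -/
lemma stmt17_nat_le_pow : ∀ n : ℕ, (n : ℝ) ≤ 2 * (3/2 : ℝ) ^ n := by
  intro n
  induction n with
  | zero => norm_num
  | succ m ih =>
      have h1 : (1:ℝ) ≤ (3/2:ℝ) ^ m := one_le_pow₀ (by norm_num)
      push_cast
      rw [pow_succ]
      nlinarith

/-- key ratio estimate: `((t+1+dm)/(t+dm))^dm ≤ 1 + dm/t` for `t ≥ 1`, `dm > 0`. -/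
lemma stmt17_ratio {dm t : ℝ} (hdm : 0 < dm) (ht : 1 ≤ t) :
    ((t + 1 + dm) / (t + dm)) ^ dm ≤ 1 + dm / t := by
  have ht0 : 0 < t := lt_of_lt_of_le one_pos ht
  have htdm : 0 < t + dm := by linarith
  have hbase : 0 < (t + 1 + dm) / (t + dm) := by positivity
  have h1 : ((t + 1 + dm) / (t + dm)) ^ dm = Real.exp (dm * Real.log ((t+1+dm)/(t+dm))) := by
    rw [Real.rpow_def_of_pos hbase, mul_comm]
  rw [h1]
  have hlog1 : Real.log ((t+1+dm)/(t+dm)) ≤ 1/(t+dm) := by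
    have := Real.log_le_sub_one_of_pos hbase
    have heq : (t+1+dm)/(t+dm) - 1 = 1/(t+dm) := by field_simp; ring
    linarith [heq ▸ this]
  have hlog2 : dm/(t+dm) ≤ Real.log (1 + dm/t) := by
    have hpos : 0 < 1 + dm/t := by positivity
    have := Real.log_le_sub_one_of_pos (x := (1 + dm/t)⁻¹) (by positivity)
    rw [Real.log_inv] at this
    have heq : (1 + dm/t)⁻¹ - 1 = -(dm/t) * (1 + dm/t)⁻¹ := by field_simp; ring
    have h3 : (dm/t) * (1 + dm/t)⁻¹ = dm/(t+dm) := by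
      rw [eq_div_iff (ne_of_gt htdm)]
      field_simp
      try ring
    nlinarith [this, heq, h3]
  calc Real.exp (dm * Real.log ((t+1+dm)/(t+dm)))
      ≤ Real.exp (dm * (1/(t+dm))) := by
        apply Real.exp_le_exp.mpr
        exact mul_le_mul_of_nonneg_left hlog1 hdm.le
    _ ≤ Real.exp (Real.log (1 + dm/t)) := by
        apply Real.exp_le_exp.mpr
        calc dm * (1/(t+dm)) = dm/(t+dm) := by ring
          _ ≤ Real.log (1 + dm/t) := hlog2
    _ = 1 + dm/t := Real.exp_log (by positivity)

/-- sum of `j^α` estimate. -/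
lemma stmt17_sum_rpow {α : ℝ} (hα : -1 < α) (n : ℕ) :
    ∑ j ∈ Icc 1 n, (j:ℝ) ^ α ≤ (1 + 1/(α+1)) * (n:ℝ) ^ (α+1) := by
  have hβ : 0 < α + 1 := by linarith
  have hC1 : (1:ℝ) ≤ 1 + 1/(α+1) := by
    have : 0 < 1/(α+1) := by positivity
    linarith
  rcases Nat.eq_zero_or_pos n with rfl | hn
  · simp [Real.zero_rpow (ne_of_gt hβ)]
  have hn0 : (0:ℝ) < n := by exact_mod_cast hn
  rcases le_or_gt 0 α with hα0 | hα0
  · -- α ≥ 0 : each term ≤ n^α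
    have hterm : ∀ j ∈ Icc 1 n, (j:ℝ) ^ α ≤ (n:ℝ) ^ α := by
      intro j hj
      have hjn : (j:ℝ) ≤ n := by exact_mod_cast (Finset.mem_Icc.mp hj).2
      exact Real.rpow_le_rpow (by positivity) hjn hα0
    calc ∑ j ∈ Icc 1 n, (j:ℝ) ^ α ≤ ∑ _j ∈ Icc 1 n, (n:ℝ) ^ α := Finset.sum_le_sum hterm
      _ = (n:ℝ) * (n:ℝ) ^ α := by
          rw [Finset.sum_const, Nat.card_Icc]
          simp [nsmul_eq_mul]
      _ = (n:ℝ) ^ (α+1) := by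
          rw [Real.rpow_add hn0, Real.rpow_one]; ring
      _ ≤ (1 + 1/(α+1)) * (n:ℝ) ^ (α+1) := by
          have : (0:ℝ) ≤ (n:ℝ) ^ (α+1) := Real.rpow_nonneg hn0.le _
          nlinarith
  · -- -1 < α < 0 : telescoping
    have hβ1 : α + 1 ≤ 1 := by linarith
    have hterm : ∀ i : ℕ, (((i:ℝ)+1)) ^ α ≤ ((((i:ℝ)+1)) ^ (α+1) - ((i:ℝ)) ^ (α+1)) / (α+1) := by
      intro i
      set x : ℝ := (i:ℝ) + 1 with hx_def
      have hx1 : 1 ≤ x := by simp [hx_def]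
      have hx0 : 0 < x := lt_of_lt_of_le one_pos hx1
      have hb : (x - 1) ^ (α+1) ≤ x ^ (α+1) - (α+1) * x ^ α := by
        have hxinv : 1/x ≤ 1 := by rw [div_le_one hx0]; exact hx1
        have hxinv0 : 0 ≤ 1 + (-1/x) := by rw [neg_div]; linarith
        have hbern : (1 + (-1/x)) ^ (α+1) ≤ 1 + (α+1) * (-1/x) := by
          apply rpow_one_add_le_one_add_mul_self _ hβ.le hβ1
          rw [neg_div]; linarith
        have hfac : x - 1 = x * (1 + (-1/x)) := by field_simp; ring
        have hpow : x ^ α = x ^ (α+1) / x := by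
          have h := Real.rpow_sub hx0 (α+1) 1
          rw [show α + 1 - 1 = α by ring, Real.rpow_one] at h
          exact h
        calc (x - 1) ^ (α+1) = (x * (1 + (-1/x))) ^ (α+1) := by rw [← hfac]
          _ = x ^ (α+1) * (1 + (-1/x)) ^ (α+1) := Real.mul_rpow hx0.le hxinv0
          _ ≤ x ^ (α+1) * (1 + (α+1) * (-1/x)) := by
              exact mul_le_mul_of_nonneg_left hbern (Real.rpow_nonneg hx0.le _)
          _ = x ^ (α+1) - (α+1) * (x ^ (α+1) / x) := by ring
          _ = x ^ (α+1) - (α+1) * x ^ α := by rw [← hpow]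
      have hx1' : x - 1 = (i:ℝ) := by rw [hx_def]; ring
      rw [le_div_iff₀ hβ, ← hx1']
      nlinarith [hb]
    calc ∑ j ∈ Icc 1 n, (j:ℝ) ^ α
        = ∑ i ∈ range n, ((i:ℝ)+1) ^ α := by
          rw [← Finset.Ico_add_one_right_eq_Icc, Finset.sum_Ico_eq_sum_range]
          try simp only [Nat.add_sub_cancel]
          apply Finset.sum_congr rfl
          intro i _
          push_cast; ring_nf
      _ ≤ ∑ i ∈ range n, ((((i:ℝ)+1)) ^ (α+1) - ((i:ℝ)) ^ (α+1)) / (α+1) := by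
          exact Finset.sum_le_sum fun i _ => hterm i
      _ = (∑ i ∈ range n, ((((i:ℕ):ℝ)+1) ^ (α+1) - (((i:ℕ)):ℝ) ^ (α+1))) / (α+1) := by
          rw [Finset.sum_div]
      _ = ((n:ℝ) ^ (α+1) - ((0:ℕ):ℝ) ^ (α+1)) / (α+1) := by
          rw [show (∑ i ∈ range n, ((((i:ℕ):ℝ)+1) ^ (α+1) - (((i:ℕ)):ℝ) ^ (α+1)))
              = ∑ i ∈ range n, ((((i+1:ℕ)):ℝ) ^ (α+1) - (((i:ℕ)):ℝ) ^ (α+1)) by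
            apply Finset.sum_congr rfl; intro i _; push_cast; ring_nf]
          rw [Finset.sum_range_sub (fun i => (((i:ℕ)):ℝ) ^ (α+1)) n]
      _ = (n:ℝ) ^ (α+1) / (α+1) := by
          norm_num [Real.zero_rpow (ne_of_gt hβ)]
      _ ≤ (1 + 1/(α+1)) * (n:ℝ) ^ (α+1) := by
          have h1 : (0:ℝ) ≤ (n:ℝ) ^ (α+1) := Real.rpow_nonneg hn0.le _
          rw [div_le_iff₀ hβ]
          have : 1 ≤ (1 + 1/(α+1)) * (α+1) := by
            field_simp
            nlinarith
          nlinarith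

lemma stmt17_deriv_bound : ∀ n : ℕ, (n:ℝ) * (1/2:ℝ) ^ (n-1) ≤ 4 * (3/4:ℝ) ^ n := by
  intro n
  cases n with
  | zero => norm_num
  | succ m =>
      have h1 := stmt17_nat_le_pow (m+1)
      have h2 : (0:ℝ) < (1/2:ℝ) ^ m := by positivity
      have h3 : (3/4:ℝ) ^ (m+1) = (3/4:ℝ) * ((3/2:ℝ) ^ m * (1/2:ℝ) ^ m) := by
        rw [← mul_pow]; norm_num [pow_succ]; ring
      have h4 : ((m+1:ℕ):ℝ) * (1/2:ℝ) ^ ((m+1)-1) = ((m+1:ℕ):ℝ) * (1/2:ℝ) ^ m := by norm_num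
      rw [h4, h3]
      have h5 : ((m+1:ℕ):ℝ) * (1/2:ℝ) ^ m ≤ (2 * (3/2:ℝ) ^ (m+1)) * (1/2:ℝ) ^ m :=
        mul_le_mul_of_nonneg_right h1 h2.le
      calc ((m+1:ℕ):ℝ) * (1/2:ℝ) ^ m ≤ (2 * (3/2:ℝ) ^ (m+1)) * (1/2:ℝ) ^ m := h5
        _ = 4 * ((3/4:ℝ) * ((3/2:ℝ) ^ m * (1/2:ℝ) ^ m)) := by rw [pow_succ]; ring

lemma stmt17_recurrence (dm dp : ℝ) (hdm : 0 < dm)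
    (d : ℕ → ℝ) (hd : ∀ k : ℕ, 1 ≤ k → dm ≤ d k ∧ d k ≤ dp)
    (p : ℕ → ℝ) (hp : ∀ j, 0 < p j)
    (hps : ∀ x : ℝ, 0 ≤ x → x < 1 → HasSum (fun n => p n * x ^ n)
        (Real.exp (∑' k : ℕ, d (k + 1) * x ^ (k + 1) / ((k : ℝ) + 1)))) :
    ∀ n : ℕ, ((n:ℝ) + 1) * p (n+1) = ∑ k ∈ Finset.range (n+1), d (k+1) * p (n - k) := by
  set g : ℝ → ℝ := fun x => ∑' k : ℕ, d (k + 1) * x ^ (k + 1) / ((k : ℝ) + 1) with hg_def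
  set t : Set ℝ := Set.Ioo (-(1/2):ℝ) (1/2) with ht_def
  have hd1 : ∀ k : ℕ, dm ≤ d (k+1) ∧ d (k+1) ≤ dp := fun k => hd (k+1) (by omega)
  have hdabs : ∀ k : ℕ, |d (k+1)| ≤ dp := by
    intro k
    rw [abs_of_pos (lt_of_lt_of_le hdm (hd1 k).1)]
    exact (hd1 k).2
  have ht_open : IsOpen t := isOpen_Ioo
  have ht_conn : IsPreconnected t := isPreconnected_Ioo
  have h0t : (0:ℝ) ∈ t := by constructor <;> norm_num
  have hyabs : ∀ y : ℝ, y ∈ t → |y| ≤ 1/2 := by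
    intro y hy
    exact le_of_lt (abs_lt.mpr ⟨hy.1, hy.2⟩)
  have hsum34 : Summable (fun n => p n * (3/4:ℝ) ^ n) :=
    (hps (3/4) (by norm_num) (by norm_num)).summable
  have hsum0 : Summable (fun n => p n * (0:ℝ) ^ n) :=
    (hps 0 le_rfl (by norm_num)).summable
  -- derivative of F = ∑ p n x^n
  have hu : Summable (fun n => 4 * (p n * (3/4:ℝ) ^ n)) := hsum34.mul_left 4
  have hbound : ∀ (n : ℕ), ∀ y ∈ t, ‖p n * ((n:ℝ) * y ^ (n-1))‖ ≤ 4 * (p n * (3/4:ℝ) ^ n) := by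
    intro n y hy
    have h1 : ‖p n * ((n:ℝ) * y ^ (n-1))‖ = p n * ((n:ℝ) * |y| ^ (n-1)) := by
      rw [Real.norm_eq_abs, abs_mul, abs_mul, abs_pow, abs_of_pos (hp n),
        abs_of_nonneg (Nat.cast_nonneg n)]
    rw [h1]
    have h2 : |y| ^ (n-1) ≤ (1/2:ℝ) ^ (n-1) :=
      pow_le_pow_left₀ (abs_nonneg y) (hyabs y hy) _
    have h3 : (n:ℝ) * |y| ^ (n-1) ≤ (n:ℝ) * (1/2:ℝ) ^ (n-1) :=
      mul_le_mul_of_nonneg_left h2 (Nat.cast_nonneg n)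
    have h4 := stmt17_deriv_bound n
    calc p n * ((n:ℝ) * |y| ^ (n-1)) ≤ p n * (4 * (3/4:ℝ) ^ n) := by
          exact mul_le_mul_of_nonneg_left (le_trans h3 h4) (hp n).le
      _ = 4 * (p n * (3/4:ℝ) ^ n) := by ring
  have hF : ∀ y ∈ t, HasDerivAt (fun z : ℝ => ∑' n : ℕ, p n * z ^ n)
      (∑' n : ℕ, p n * ((n:ℝ) * y ^ (n-1))) y := by
    intro y hy
    exact hasDerivAt_tsum_of_isPreconnected hu ht_open ht_conn
      (fun n z _ => (hasDerivAt_pow n z).const_mul (p n)) hbound h0t hsum0 hy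
  -- derivative of g
  have hug : Summable (fun k : ℕ => dp * (1/2:ℝ) ^ k) :=
    (summable_geometric_of_lt_one (by norm_num) (by norm_num)).mul_left dp
  have hgterm : ∀ (k : ℕ), ∀ z : ℝ, z ∈ t →
      HasDerivAt (fun y : ℝ => d (k+1) * y ^ (k+1) / ((k:ℝ)+1)) (d (k+1) * z ^ k) z := by
    intro k z _
    have h := ((hasDerivAt_pow (k+1) z).const_mul (d (k+1))).div_const ((k:ℝ)+1)
    have hk0 : ((k:ℝ)+1) ≠ 0 := by positivity
    have heq : d (k+1) * (((k+1:ℕ):ℝ) * z ^ ((k+1)-1)) / ((k:ℝ)+1) = d (k+1) * z ^ k := by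
      push_cast
      try simp only [Nat.add_sub_cancel]
      field_simp
    rw [heq] at h
    exact h
  have hgbound : ∀ (k : ℕ), ∀ y ∈ t, ‖d (k+1) * y ^ k‖ ≤ dp * (1/2:ℝ) ^ k := by
    intro k y hy
    rw [Real.norm_eq_abs, abs_mul, abs_pow]
    exact mul_le_mul (hdabs k) (pow_le_pow_left₀ (abs_nonneg y) (hyabs y hy) _)
      (by positivity) (le_trans (abs_nonneg _) (hdabs 0))
  have hg0 : Summable (fun k : ℕ => d (k+1) * (0:ℝ) ^ (k+1) / ((k:ℝ)+1)) := by
    have : (fun k : ℕ => d (k+1) * (0:ℝ) ^ (k+1) / ((k:ℝ)+1)) = fun _ => (0:ℝ) := by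
      funext k; simp
    rw [this]; exact summable_zero
  have hG : ∀ y ∈ t, HasDerivAt g (∑' k : ℕ, d (k+1) * y ^ k) y := by
    intro y hy
    exact hasDerivAt_tsum_of_isPreconnected hug ht_open ht_conn hgterm hgbound h0t hg0 hy
  -- the common sum function
  set S : ℝ → ℝ := fun y => Real.exp (g y) * ∑' k : ℕ, d (k+1) * y ^ k with hS_def
  have hsub : ∀ y : ℝ, y ∈ Set.Ioo (0:ℝ) (1/2) → y ∈ t := by
    intro y hy; exact ⟨by linarith [hy.1], hy.2⟩
  -- a-side
  have haS : ∀ y : ℝ, y ∈ Set.Ioo (0:ℝ) (1/2) →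
      HasSum (fun n : ℕ => (((n:ℝ)+1) * p (n+1)) * y ^ n) (S y) := by
    intro y hy
    have hyt := hsub y hy
    have hE : HasDerivAt (fun z : ℝ => Real.exp (g z)) (Real.exp (g y) * ∑' k : ℕ, d (k+1) * y ^ k) y :=
      (hG y hyt).exp
    have hEv : (fun z : ℝ => ∑' n : ℕ, p n * z ^ n) =ᶠ[nhds y] (fun z => Real.exp (g z)) := by
      apply Filter.eventuallyEq_of_mem (isOpen_Ioo.mem_nhds hy)
      intro z hz
      exact (hps z (le_of_lt hz.1) (by linarith [hz.2])).tsum_eq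
    have hE' : HasDerivAt (fun z : ℝ => ∑' n : ℕ, p n * z ^ n)
        (Real.exp (g y) * ∑' k : ℕ, d (k+1) * y ^ k) y := hE.congr_of_eventuallyEq hEv
    have key : (∑' n : ℕ, p n * ((n:ℝ) * y ^ (n-1))) = S y := (hF y hyt).unique hE'
    have hsumd : Summable (fun n : ℕ => ‖p n * ((n:ℝ) * y ^ (n-1))‖) :=
      Summable.of_nonneg_of_le (fun n => norm_nonneg _) (fun n => hbound n y hyt) hu
    have haS0 : HasSum (fun n : ℕ => p n * ((n:ℝ) * y ^ (n-1))) (S y) := by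
      rw [← key]; exact hsumd.of_norm.hasSum
    have hshift := (hasSum_nat_add_iff' (f := fun n : ℕ => p n * ((n:ℝ) * y ^ (n-1))) 1).mpr haS0
    have hz : ∑ i ∈ range 1, p i * ((i:ℝ) * y ^ (i-1)) = 0 := by simp
    rw [hz, sub_zero] at hshift
    have heq : (fun n : ℕ => p (n+1) * (((n+1:ℕ):ℝ) * y ^ ((n+1)-1)))
        = fun n : ℕ => (((n:ℝ)+1) * p (n+1)) * y ^ n := by
      funext n
      push_cast
      try simp only [Nat.add_sub_cancel]
      ring
    rwa [heq] at hshift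
  -- b-side
  have hbS : ∀ y : ℝ, y ∈ Set.Ioo (0:ℝ) (1/2) →
      HasSum (fun n : ℕ => (∑ k ∈ range (n+1), d (k+1) * p (n-k)) * y ^ n) (S y) := by
    intro y hy
    have hyt := hsub y hy
    have hy0 : 0 ≤ y := le_of_lt hy.1
    have hnf : Summable (fun k : ℕ => ‖d (k+1) * y ^ k‖) :=
      Summable.of_nonneg_of_le (fun k => norm_nonneg _) (fun k => hgbound k y hyt) hug
    have hng : Summable (fun j : ℕ => ‖p j * y ^ j‖) := by
      apply Summable.of_nonneg_of_le (fun j => norm_nonneg _) _ hsum34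
      intro j
      rw [Real.norm_eq_abs, abs_mul, abs_of_pos (hp j), abs_pow, abs_of_nonneg hy0]
      exact mul_le_mul_of_nonneg_left
        (pow_le_pow_left₀ hy0 (by linarith [hy.2]) _) (hp j).le
    have hmul := hasSum_sum_range_mul_of_summable_norm hnf hng
    have hFy : (∑' j : ℕ, p j * y ^ j) = Real.exp (g y) :=
      (hps y hy0 (by linarith [hy.2])).tsum_eq
    rw [hFy] at hmul
    have hval : (∑' k : ℕ, d (k+1) * y ^ k) * Real.exp (g y) = S y := by
      rw [hS_def]; ring
    rw [hval] at hmul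
    have hterm : (fun n : ℕ => ∑ k ∈ range (n+1), (d (k+1) * y ^ k) * (p (n-k) * y ^ (n-k)))
        = fun n : ℕ => (∑ k ∈ range (n+1), d (k+1) * p (n-k)) * y ^ n := by
      funext n
      rw [Finset.sum_mul]
      apply Finset.sum_congr rfl
      intro k hk
      have hkn : k ≤ n := Nat.lt_succ_iff.mp (Finset.mem_range.mp hk)
      have : y ^ k * y ^ (n-k) = y ^ n := by
        rw [← pow_add, Nat.add_sub_cancel' hkn]
      calc (d (k+1) * y ^ k) * (p (n-k) * y ^ (n-k))
          = d (k+1) * p (n-k) * (y ^ k * y ^ (n-k)) := by ring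
        _ = d (k+1) * p (n-k) * y ^ n := by rw [this]
    rwa [hterm] at hmul
  exact stmt17_coeff_unique haS hbS

set_option maxHeartbeats 1000000 in
/-- For the coefficients `p_j` of `exp(∑ d_k z^k/k)` and `ε ≥ 0`, `q ≥ 1`
with `q(d⁻−1) − ε > −1`: `∑_{j=1}^n j^{−ε} p_j^q ≤ C(d⁻,d⁺,q,ε) n^{1−ε} p_n^q`. -/
theorem stmt_17 (dm dp : ℝ) (hdm : 0 < dm) (hdp : dm ≤ dp)
    (ε q : ℝ) (hε : 0 ≤ ε) (hq : 1 ≤ q) (hqε : -1 < q * (dm - 1) - ε) :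
    ∃ C : ℝ, 0 < C ∧
      ∀ (d : ℕ → ℝ), (∀ k : ℕ, 1 ≤ k → dm ≤ d k ∧ d k ≤ dp) →
      ∀ (p : ℕ → ℝ), (∀ j, 0 < p j) →
        (∀ x : ℝ, 0 ≤ x → x < 1 →
          HasSum (fun n => p n * x ^ n)
            (Real.exp (∑' k : ℕ, d (k + 1) * x ^ (k + 1) / ((k : ℝ) + 1)))) →
        ∀ n : ℕ, 1 ≤ n →
          ∑ j ∈ Finset.Icc 1 n, (j : ℝ) ^ (-ε) * p j ^ q
            ≤ C * (n : ℝ) ^ (1 - ε) * p n ^ q := by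
  set α : ℝ := q * (dm - 1) - ε with hα_def
  have hα1 : 0 < α + 1 := by linarith
  set C₀ : ℝ := dp * (1 + dm) ^ dm / dm with hC0_def
  have hdp0 : 0 < dp := lt_of_lt_of_le hdm hdp
  have hC₀pos : 0 < C₀ := by
    have : (0:ℝ) < (1 + dm) ^ dm := Real.rpow_pos_of_pos (by linarith) _
    positivity
  set C₁ : ℝ := 1 + 1/(α+1) with hC1_def
  have hC₁pos : 0 < C₁ := by
    have h : 0 < 1/(α+1) := by positivity
    rw [hC1_def]; linarith
  refine ⟨C₀ ^ q * C₁, by positivity, ?_⟩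
  intro d hd p hp hps n hn
  have hrec := stmt17_recurrence dm dp hdm d hd p hp hps
  set S : ℕ → ℝ := fun m => ∑ j ∈ range m, p j with hS_def
  have hSpos : ∀ m : ℕ, 1 ≤ m → 0 < S m := by
    intro m hm
    apply Finset.sum_pos (fun j _ => hp j)
    exact Finset.nonempty_range_iff.mpr (by omega)
  have hreflect : ∀ m : ℕ, ∑ k ∈ range (m+1), p (m - k) = S (m+1) := by
    intro m
    rw [hS_def]
    have := Finset.sum_range_reflect (fun j => p j) (m+1)
    simpa using this
  have hlow : ∀ m : ℕ, 1 ≤ m → dm * S m ≤ (m:ℝ) * p m := by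
    intro m hm
    obtain ⟨m', rfl⟩ : ∃ m', m = m' + 1 := ⟨m - 1, by omega⟩
    push_cast
    rw [hrec m']
    calc dm * S (m'+1) = ∑ k ∈ range (m'+1), dm * p (m' - k) := by
          rw [← Finset.mul_sum, hreflect]
      _ ≤ ∑ k ∈ range (m'+1), d (k+1) * p (m' - k) := by
          apply Finset.sum_le_sum
          intro k _
          exact mul_le_mul_of_nonneg_right (hd (k+1) (by omega)).1 (hp _).le
  have hupp : ∀ m : ℕ, 1 ≤ m → (m:ℝ) * p m ≤ dp * S m := by
    intro m hm
    obtain ⟨m', rfl⟩ : ∃ m', m = m' + 1 := ⟨m - 1, by omega⟩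
    push_cast
    rw [hrec m']
    calc ∑ k ∈ range (m'+1), d (k+1) * p (m' - k)
        ≤ ∑ k ∈ range (m'+1), dp * p (m' - k) := by
          apply Finset.sum_le_sum
          intro k _
          exact mul_le_mul_of_nonneg_right (hd (k+1) (by omega)).2 (hp _).le
      _ = dp * S (m'+1) := by rw [← Finset.mul_sum, hreflect]
  have hstep : ∀ m : ℕ, 1 ≤ m → S m * (1 + dm/(m:ℝ)) ≤ S (m+1) := by
    intro m hm
    have hm0 : (0:ℝ) < m := by exact_mod_cast hm
    have h1 := hlow m hm
    have h2 : dm * S m / (m:ℝ) ≤ p m := by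
      rw [div_le_iff₀ hm0]
      nlinarith [hp m]
    have h3 : S (m+1) = S m + p m := by rw [hS_def]; exact Finset.sum_range_succ _ _
    rw [h3]
    have : S m * (1 + dm/(m:ℝ)) = S m + dm * S m / (m:ℝ) := by field_simp
    rw [this]
    linarith
  have hratio : ∀ j m : ℕ, 1 ≤ j → j ≤ m →
      S j * (((m:ℝ) + dm)/((j:ℝ) + dm)) ^ dm ≤ S m := by
    intro j m hj hjm
    induction m, hjm using Nat.le_induction with
    | base =>
        have : (((j:ℝ) + dm)/((j:ℝ) + dm)) = 1 := by
          apply div_self; positivity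
        rw [this, Real.one_rpow, mul_one]
    | succ m hm ih =>
        have hm1 : 1 ≤ m := le_trans hj hm
        have hm0 : (1:ℝ) ≤ (m:ℝ) := by exact_mod_cast hm1
        have hmpos : (0:ℝ) < m := by linarith
        have hSm : 0 < S m := hSpos m hm1
        have hRsplit : (((m+1:ℕ):ℝ) + dm)/((j:ℝ) + dm)
            = (((m:ℝ) + dm)/((j:ℝ) + dm)) * (((m:ℝ) + 1 + dm)/((m:ℝ) + dm)) := by
          push_cast
          have h1 : (0:ℝ) < (m:ℝ) + dm := by linarith
          have h2 : (0:ℝ) < (j:ℝ) + dm := by positivity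
          field_simp
        rw [hRsplit, Real.mul_rpow (by positivity) (by positivity)]
        have hr := stmt17_ratio hdm hm0
        calc S j * ((((m:ℝ) + dm)/((j:ℝ) + dm)) ^ dm * (((m:ℝ) + 1 + dm)/((m:ℝ) + dm)) ^ dm)
            = (S j * (((m:ℝ) + dm)/((j:ℝ) + dm)) ^ dm) * (((m:ℝ) + 1 + dm)/((m:ℝ) + dm)) ^ dm := by
              ring
          _ ≤ S m * (((m:ℝ) + 1 + dm)/((m:ℝ) + dm)) ^ dm := by
              exact mul_le_mul_of_nonneg_right ih (Real.rpow_nonneg (by positivity) _)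
          _ ≤ S m * (1 + dm/(m:ℝ)) := mul_le_mul_of_nonneg_left hr hSm.le
          _ ≤ S (m+1) := hstep m hm1
  -- key pointwise bound
  have hnR : (0:ℝ) < (n:ℝ) := by exact_mod_cast hn
  have hkey : ∀ j : ℕ, 1 ≤ j → j ≤ n →
      p j ≤ C₀ * p n * ((j:ℝ) ^ (dm-1) * (n:ℝ) ^ (1-dm)) := by
    intro j hj hjn
    have hjR : (0:ℝ) < (j:ℝ) := by exact_mod_cast hj
    have hjR1 : (1:ℝ) ≤ (j:ℝ) := by exact_mod_cast hj
    have hjnR : (j:ℝ) ≤ (n:ℝ) := by exact_mod_cast hjn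
    set J : ℝ := (j:ℝ)
    set N : ℝ := (n:ℝ)
    have hNdm : (0:ℝ) < N ^ dm := Real.rpow_pos_of_pos hnR _
    have hJdm : (0:ℝ) < J ^ dm := Real.rpow_pos_of_pos hjR _
    have h1 : J * p j ≤ dp * S j := hupp j hj
    have h2 := hratio j n hj hjn
    -- A ≥ N/((1+dm)J) so S j * N^dm ≤ S n * (1+dm)^dm * J^dm
    have hA : N / ((1+dm) * J) ≤ (N + dm)/(J + dm) := by
      rw [div_le_div_iff₀ (by positivity) (by positivity)]
      nlinarith [mul_le_mul_of_nonneg_left hjR1 (mul_nonneg hnR.le hdm.le),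
        mul_nonneg hdm.le hjR.le, mul_nonneg (mul_nonneg hdm.le hdm.le) hjR.le]
    have hApow : (N / ((1+dm) * J)) ^ dm ≤ ((N + dm)/(J + dm)) ^ dm :=
      Real.rpow_le_rpow (by positivity) hA hdm.le
    have hAeq : (N / ((1+dm) * J)) ^ dm = N ^ dm / ((1+dm) ^ dm * J ^ dm) := by
      rw [Real.div_rpow (by positivity) (by positivity),
        Real.mul_rpow (by positivity) (by positivity)]
    have hSn : 0 < S n := hSpos n hn
    have hSj : 0 < S j := hSpos j hj
    have h3 : S j * (N ^ dm / ((1+dm) ^ dm * J ^ dm)) ≤ S n := by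
      calc S j * (N ^ dm / ((1+dm) ^ dm * J ^ dm)) = S j * (N / ((1+dm) * J)) ^ dm := by
            rw [hAeq]
        _ ≤ S j * ((N + dm)/(J + dm)) ^ dm := mul_le_mul_of_nonneg_left hApow hSj.le
        _ ≤ S n := h2
    have hBdm : (0:ℝ) < (1+dm) ^ dm := Real.rpow_pos_of_pos (by linarith) _
    have h4 : S j * N ^ dm ≤ S n * (1+dm) ^ dm * J ^ dm := by
      have := mul_le_mul_of_nonneg_right h3 (mul_pos hBdm hJdm).le
      calc S j * N ^ dm
          = S j * (N ^ dm / ((1+dm) ^ dm * J ^ dm)) * ((1+dm) ^ dm * J ^ dm) := by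
            field_simp
        _ ≤ S n * ((1+dm) ^ dm * J ^ dm) := this
        _ = S n * (1+dm) ^ dm * J ^ dm := by ring
    have h5 : dm * S n ≤ N * p n := hlow n hn
    -- combine:  J * N^dm * p j ≤ C₀ * p n * J^dm * N
    have hmain : J * N ^ dm * p j ≤ C₀ * p n * J ^ dm * N := by
      have e1 : J * N ^ dm * p j = (J * p j) * N ^ dm := by ring
      have e2 : (J * p j) * N ^ dm ≤ (dp * S j) * N ^ dm :=
        mul_le_mul_of_nonneg_right h1 hNdm.le
      have e3 : (dp * S j) * N ^ dm = dp * (S j * N ^ dm) := by ring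
      have e4 : dp * (S j * N ^ dm) ≤ dp * (S n * (1+dm) ^ dm * J ^ dm) :=
        mul_le_mul_of_nonneg_left h4 hdp0.le
      have e5 : dp * (S n * (1+dm) ^ dm * J ^ dm) ≤ dp * ((N * p n / dm) * (1+dm) ^ dm * J ^ dm) := by
        have hSn' : S n ≤ N * p n / dm := by
          rw [le_div_iff₀ hdm]
          nlinarith
        have : S n * (1+dm) ^ dm * J ^ dm ≤ (N * p n / dm) * (1+dm) ^ dm * J ^ dm := by
          exact mul_le_mul_of_nonneg_right
            (mul_le_mul_of_nonneg_right hSn' hBdm.le) hJdm.le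
        exact mul_le_mul_of_nonneg_left this hdp0.le
      have e6 : dp * ((N * p n / dm) * (1+dm) ^ dm * J ^ dm) = C₀ * p n * J ^ dm * N := by
        rw [hC0_def]; field_simp
      linarith [e1 ▸ le_trans (le_trans e2 (e3 ▸ e4)) e5, e6]
    have hdiv : C₀ * p n * ((j:ℝ) ^ (dm-1) * (n:ℝ) ^ (1-dm))
        = (C₀ * p n * J ^ dm * N) / (J * N ^ dm) := by
      have hJ1 : J ^ (dm - 1) = J ^ dm / J := by
        rw [Real.rpow_sub hjR, Real.rpow_one]
      have hN1 : N ^ (1 - dm) = N / N ^ dm := by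
        rw [Real.rpow_sub hnR, Real.rpow_one]
      rw [hJ1, hN1, div_mul_div_comm, mul_div_assoc', ← mul_assoc]
    have hJN : 0 < J * N ^ dm := mul_pos hjR hNdm
    rw [hdiv, le_div_iff₀ hJN]
    nlinarith [hmain]
  -- sum up
  have hq0 : (0:ℝ) ≤ q := by linarith
  have hpn : (0:ℝ) < p n := hp n
  set M : ℝ := C₀ ^ q * p n ^ q * (n:ℝ) ^ ((1-dm)*q) with hM_def
  have hMpos : 0 < M := by
    have h1 : (0:ℝ) < C₀ ^ q := Real.rpow_pos_of_pos hC₀pos _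
    have h2 : (0:ℝ) < p n ^ q := Real.rpow_pos_of_pos hpn _
    have h3 : (0:ℝ) < (n:ℝ) ^ ((1-dm)*q) := Real.rpow_pos_of_pos hnR _
    positivity
  have hterm : ∀ j ∈ Icc 1 n, (j:ℝ) ^ (-ε) * p j ^ q ≤ M * (j:ℝ) ^ α := by
    intro j hj
    obtain ⟨hj1, hjn⟩ := Finset.mem_Icc.mp hj
    have hjR : (0:ℝ) < (j:ℝ) := by exact_mod_cast hj1
    have h6 : p j ^ q ≤ (C₀ * p n * ((j:ℝ) ^ (dm-1) * (n:ℝ) ^ (1-dm))) ^ q :=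
      Real.rpow_le_rpow (hp j).le (hkey j hj1 hjn) hq0
    have h7 : (C₀ * p n * ((j:ℝ) ^ (dm-1) * (n:ℝ) ^ (1-dm))) ^ q
        = C₀ ^ q * p n ^ q * ((j:ℝ) ^ ((dm-1)*q) * (n:ℝ) ^ ((1-dm)*q)) := by
      rw [Real.mul_rpow (by positivity) (by positivity),
        Real.mul_rpow (by positivity) (by positivity),
        Real.mul_rpow (by positivity) (by positivity),
        ← Real.rpow_mul hjR.le, ← Real.rpow_mul hnR.le]
    have h8 : (j:ℝ) ^ (-ε) * p j ^ q
        ≤ (j:ℝ) ^ (-ε) * (C₀ ^ q * p n ^ q * ((j:ℝ) ^ ((dm-1)*q) * (n:ℝ) ^ ((1-dm)*q))) := by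
      apply mul_le_mul_of_nonneg_left _ (Real.rpow_nonneg hjR.le _)
      rw [← h7]; exact h6
    calc (j:ℝ) ^ (-ε) * p j ^ q
        ≤ (j:ℝ) ^ (-ε) * (C₀ ^ q * p n ^ q * ((j:ℝ) ^ ((dm-1)*q) * (n:ℝ) ^ ((1-dm)*q))) := h8
      _ = M * ((j:ℝ) ^ (-ε) * (j:ℝ) ^ ((dm-1)*q)) := by rw [hM_def]; ring
      _ = M * (j:ℝ) ^ α := by
          rw [← Real.rpow_add hjR, hα_def]
          ring_nf
  calc ∑ j ∈ Finset.Icc 1 n, (j:ℝ) ^ (-ε) * p j ^ q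
      ≤ ∑ j ∈ Finset.Icc 1 n, M * (j:ℝ) ^ α := Finset.sum_le_sum hterm
    _ = M * ∑ j ∈ Finset.Icc 1 n, (j:ℝ) ^ α := by rw [Finset.mul_sum]
    _ ≤ M * (C₁ * (n:ℝ) ^ (α+1)) := by
        exact mul_le_mul_of_nonneg_left (stmt17_sum_rpow hqε n) hMpos.le
    _ = C₀ ^ q * C₁ * (n:ℝ) ^ (1-ε) * p n ^ q := by
        rw [hM_def]
        have : (n:ℝ) ^ ((1-dm)*q) * (n:ℝ) ^ (α+1) = (n:ℝ) ^ (1-ε) := by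
          rw [← Real.rpow_add hnR, hα_def]
          ring_nf
        calc C₀ ^ q * p n ^ q * (n:ℝ) ^ ((1-dm)*q) * (C₁ * (n:ℝ) ^ (α+1))
            = C₀ ^ q * C₁ * ((n:ℝ) ^ ((1-dm)*q) * (n:ℝ) ^ (α+1)) * p n ^ q := by ring
          _ = C₀ ^ q * C₁ * (n:ℝ) ^ (1-ε) * p n ^ q := by rw [this]
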